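/- For $n \ge 2$, the continuous-time quantum walk on the bunkbed graph $\mathcal{B}_n(Q_n)$, whose adjacency matrix is $J_2 \otimes A_{Q_n}$ where $J_2$ is the $2 \times 2$ all-ones matrix, starting at vertex $(0, 0_n)$, is not instantaneous uniform mixing at any time: for every $t \in \mathbb{R}$ there exists a vertex $v \in \mathbb{Z}_2 \times \mathbb{Z}_2^n$ with $|\psi_t(v)|^2 \neq 2^{-(n+1)}$. -/

import Mathlib

open Matrix Complex Finset Kronecker

/-- Hamming weight of a vector in `(ZMod 2)^n`. -/
def wt {n : ℕ} (x : Fin n → ZMod 2) : ℕ := (Finset.univ.filter fun i => x i = 1).card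

/-- Inner product modulo 2. -/
def dot {n : ℕ} (a x : Fin n → ZMod 2) : ZMod 2 := ∑ i, a i * x i

/-- Adjacency matrix of the hypercube `Q_n`: `A[x,y] = 1` iff `|x ⊕ y| = 1`. -/
def adjQ (n : ℕ) : Matrix (Fin n → ZMod 2) (Fin n → ZMod 2) ℂ :=
  Matrix.of fun x y => if wt (x + y) = 1 then 1 else 0

/-- Continuous-time quantum walk `ψ_t = exp(-itA) ψ₀`. -/
noncomputable def walk {V : Type*} [Fintype V] [DecidableEq V]
    (A : Matrix V V ℂ) (ψ0 : V → ℂ) (t : ℝ) : V → ℂ :=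
  (NormedSpace.exp ((-(t : ℂ) * Complex.I) • A)).mulVec ψ0

/-- Adjacency matrix of `𝓑_n(Q_n)`, namely `J₂ ⊗ Q_n` with `J₂` the 2×2
all-ones matrix. -/
def bunkbedQQ (n : ℕ) :
    Matrix (ZMod 2 × (Fin n → ZMod 2)) (ZMod 2 × (Fin n → ZMod 2)) ℂ :=
  (Matrix.of fun (_ _ : ZMod 2) => (1 : ℂ)) ⊗ₖ (adjQ n)

/-- the sign character on `ZMod 2`. -/
def χ (z : ZMod 2) : ℂ := if z = 0 then 1 else -1

lemma chi_add (a b : ZMod 2) : χ (a + b) = χ a * χ b := by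
  have h : ∀ z : ZMod 2, z = 0 ∨ z = 1 := by decide
  rcases h a with ha | ha <;> rcases h b with hb | hb <;> subst ha <;> subst hb
  · norm_num [χ]
  · rw [zero_add]; norm_num [χ]
  · rw [add_zero]; norm_num [χ]
  · rw [show ((1:ZMod 2)+1)=0 from rfl]; norm_num [χ]

lemma chi_zero : χ 0 = 1 := rfl

lemma chi_sum {ι : Type*} (s : Finset ι) (f : ι → ZMod 2) :
    χ (∑ i ∈ s, f i) = ∏ i ∈ s, χ (f i) := by
  induction s using Finset.cons_induction with
  | empty => simp [χ]
  | cons i s hi ih => rw [Finset.sum_cons, Finset.prod_cons, chi_add, ih]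

lemma dot_apply {n : ℕ} (a x : Fin n → ZMod 2) : χ (dot a x) = ∏ i, χ (a i * x i) :=
  chi_sum _ _

lemma sum_chi_two (b : ZMod 2) : ∑ d : ZMod 2, χ (b * d) = if b = 0 then 2 else 0 := by
  have huniv : (Finset.univ : Finset (ZMod 2)) = {0, 1} := by decide
  have h01 : (0 : ZMod 2) ≠ 1 := by decide
  rw [huniv, Finset.sum_pair h01]
  have h : ∀ z : ZMod 2, z = 0 ∨ z = 1 := by decide
  rcases h b with hb | hb <;> subst hb <;> norm_num [χ]

lemma zmod2_cases (z : ZMod 2) : z = 0 ∨ z = 1 := by revert z; decide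

lemma wt_single {n : ℕ} (j : Fin n) : wt (Pi.single j (1 : ZMod 2)) = 1 := by
  unfold wt
  have : (Finset.univ.filter fun i : Fin n => (Pi.single j (1 : ZMod 2) : Fin n → ZMod 2) i = 1) = {j} := by
    ext i
    simp only [Finset.mem_filter, Finset.mem_univ, true_and, Finset.mem_singleton]
    constructor
    · intro h
      by_contra hij
      rw [Pi.single_eq_of_ne hij] at h
      exact (by decide : (0 : ZMod 2) ≠ 1) h
    · intro h; subst h; rw [Pi.single_eq_same]
  rw [this, Finset.card_singleton]

lemma wt_one_iff {n : ℕ} (z : Fin n → ZMod 2) :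
    wt z = 1 ↔ ∃ j, z = Pi.single j 1 := by
  constructor
  · intro h
    obtain ⟨j, hj⟩ := Finset.card_eq_one.mp h
    refine ⟨j, funext fun i => ?_⟩
    have hjmem : j ∈ (Finset.univ.filter fun i => z i = 1) := hj ▸ Finset.mem_singleton_self j
    have hzj : z j = 1 := (Finset.mem_filter.mp hjmem).2
    by_cases hij : i = j
    · subst hij; rw [Pi.single_eq_same]; exact hzj
    · rw [Pi.single_eq_of_ne hij]
      rcases zmod2_cases (z i) with h0 | h1
      · exact h0
      · exfalso
        have : i ∈ (Finset.univ.filter fun i => z i = 1) := by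
          simp [Finset.mem_filter, h1]
        rw [hj, Finset.mem_singleton] at this
        exact hij this
  · rintro ⟨j, rfl⟩; exact wt_single j

lemma sum_wt_one {n : ℕ} (g : (Fin n → ZMod 2) → ℂ) :
    ∑ z, (if wt z = 1 then g z else 0) = ∑ j, g (Pi.single j 1) := by
  rw [← Finset.sum_filter]
  have himg : (Finset.univ.filter fun z : Fin n → ZMod 2 => wt z = 1)
      = Finset.image (fun j : Fin n => Pi.single j (1 : ZMod 2)) Finset.univ := by
    ext z
    simp only [Finset.mem_filter, Finset.mem_univ, true_and, Finset.mem_image]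
    rw [wt_one_iff]
    exact ⟨fun ⟨j, hj⟩ => ⟨j, hj.symm⟩, fun ⟨j, hj⟩ => ⟨j, hj.symm⟩⟩
  rw [himg, Finset.sum_image]
  intro j _ k _ h
  by_contra hjk
  have := congr_fun h j
  dsimp only at this; rw [Pi.single_eq_same, Pi.single_eq_of_ne hjk] at this
  exact (by decide : (1 : ZMod 2) ≠ 0) this

lemma dot_add_right {n : ℕ} (a x z : Fin n → ZMod 2) :
    dot a (x + z) = dot a x + dot a z := by
  unfold dot
  rw [← Finset.sum_add_distrib]
  exact Finset.sum_congr rfl fun i _ => by rw [Pi.add_apply, mul_add]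

lemma dot_single {n : ℕ} (a : Fin n → ZMod 2) (j : Fin n) :
    dot a (Pi.single j 1) = a j := by
  unfold dot
  rw [Finset.sum_eq_single_of_mem j (Finset.mem_univ j)]
  · rw [Pi.single_eq_same, mul_one]
  · intro i _ hij
    rw [Pi.single_eq_of_ne hij, mul_zero]

lemma sum_chi_coords {n : ℕ} (a : Fin n → ZMod 2) :
    ∑ j, χ (a j) = (n : ℂ) - 2 * (wt a : ℂ) := by
  have h : ∀ j, χ (a j) = 1 - 2 * (if a j = 1 then (1:ℂ) else 0) := by
    intro j
    rcases zmod2_cases (a j) with h0 | h1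
    · rw [h0]; norm_num [χ]
    · rw [h1]; norm_num [χ]
  rw [Finset.sum_congr rfl fun j _ => h j, Finset.sum_sub_distrib, Finset.sum_const,
    ← Finset.mul_sum, Finset.sum_boole]
  simp [wt]

lemma adjQ_eigen {n : ℕ} (a : Fin n → ZMod 2) (x : Fin n → ZMod 2) :
    (adjQ n).mulVec (fun y => χ (dot a y)) x
      = ((n : ℂ) - 2 * (wt a : ℂ)) * χ (dot a x) := by
  have hxx : x + x = 0 := by
    funext i; exact (by decide : ∀ u : ZMod 2, u + u = 0) (x i)
  have step1 : (adjQ n).mulVec (fun y => χ (dot a y)) x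
      = ∑ y, (if wt (x + y) = 1 then χ (dot a y) else 0) := by
    simp only [Matrix.mulVec, dotProduct, adjQ, Matrix.of_apply, ite_mul, one_mul, zero_mul]
  rw [step1]
  rw [← Fintype.sum_equiv (Equiv.addLeft x)
    (fun z => if wt z = 1 then χ (dot a x) * χ (dot a z) else 0)
    (fun y => if wt (x + y) = 1 then χ (dot a y) else 0)
    (fun z => by
      simp only [Equiv.coe_addLeft, ← add_assoc, hxx, zero_add, dot_add_right, chi_add])]
  have : ∀ z : Fin n → ZMod 2, (if wt z = 1 then χ (dot a x) * χ (dot a z) else 0)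
      = χ (dot a x) * (if wt z = 1 then χ (dot a z) else 0) := by
    intro z; split <;> ring
  rw [Finset.sum_congr rfl fun z _ => this z, ← Finset.mul_sum, sum_wt_one]
  rw [Finset.sum_congr rfl fun j _ => by rw [dot_single], sum_chi_coords]
  ring

noncomputable def vecBA {n : ℕ} (b : ZMod 2) (a : Fin n → ZMod 2) :
    ZMod 2 × (Fin n → ZMod 2) → ℂ := fun p => χ (b * p.1) * χ (dot a p.2)

lemma bunkbed_eigen {n : ℕ} (b : ZMod 2) (a : Fin n → ZMod 2) :
    (bunkbedQQ n).mulVec (vecBA b a)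
      = ((if b = 0 then (2:ℂ) else 0) * ((n : ℂ) - 2 * (wt a : ℂ))) • vecBA b a := by
  funext p
  obtain ⟨c, x⟩ := p
  have lhs : (bunkbedQQ n).mulVec (vecBA b a) (c, x)
      = (∑ d : ZMod 2, χ (b * d)) * ((adjQ n).mulVec (fun y => χ (dot a y)) x) := by
    simp only [Matrix.mulVec, dotProduct, bunkbedQQ, Matrix.kroneckerMap_apply, Matrix.of_apply,
      one_mul, vecBA]
    rw [Fintype.sum_prod_type, Finset.sum_mul]
    refine Finset.sum_congr rfl fun d _ => ?_
    rw [Finset.mul_sum]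
    exact Finset.sum_congr rfl fun y _ => by ring
  rw [lhs, adjQ_eigen, sum_chi_two]
  simp only [Pi.smul_apply, vecBA, smul_eq_mul]
  rcases zmod2_cases b with hb | hb <;> subst hb
  · simp only [if_pos rfl, zero_mul, chi_zero, one_mul]; ring
  · rw [if_neg (by decide)]; ring

lemma sum_chi_dot {n : ℕ} (x : Fin n → ZMod 2) :
    ∑ a : Fin n → ZMod 2, χ (dot a x) = if x = 0 then (2:ℂ)^n else 0 := by
  rw [Finset.sum_congr rfl fun a _ => dot_apply a x,
    ← Fintype.prod_sum fun i (u : ZMod 2) => χ (u * x i)]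
  have hfac : ∀ i, (∑ u : ZMod 2, χ (u * x i)) = if x i = 0 then (2:ℂ) else 0 := by
    intro i
    rw [← sum_chi_two (x i)]
    exact Finset.sum_congr rfl fun u _ => by rw [mul_comm]
  rw [Finset.prod_congr rfl fun i _ => hfac i]
  by_cases hx : x = 0
  · subst hx
    simp [Finset.prod_const]
  · obtain ⟨i, hi⟩ : ∃ i, x i ≠ 0 := by
      by_contra h
      push_neg at h
      exact hx (funext h)
    rw [if_neg hx]
    exact Finset.prod_eq_zero (Finset.mem_univ i) (if_neg hi)

lemma psi0_decomp (n : ℕ) :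
    (Pi.single ((0 : ZMod 2), (0 : Fin n → ZMod 2)) (1:ℂ))
      = ((2:ℂ)^(n+1))⁻¹ • ∑ q : (ZMod 2) × (Fin n → ZMod 2), vecBA q.1 q.2 := by
  funext p
  obtain ⟨c, x⟩ := p
  have hsum : (∑ q : (ZMod 2) × (Fin n → ZMod 2), vecBA q.1 q.2) (c, x)
      = (if c = 0 then (2:ℂ) else 0) * (if x = 0 then (2:ℂ)^n else 0) := by
    rw [Finset.sum_apply, Fintype.sum_prod_type]
    have : ∀ b : ZMod 2, ∑ a : Fin n → ZMod 2, vecBA b a (c, x)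
        = χ (b * c) * (if x = 0 then (2:ℂ)^n else 0) := by
      intro b
      rw [← sum_chi_dot, Finset.mul_sum]
      exact Finset.sum_congr rfl fun a _ => rfl
    rw [Finset.sum_congr rfl fun b _ => this b, ← Finset.sum_mul]
    congr 1
    rw [← sum_chi_two c]
    exact Finset.sum_congr rfl fun b _ => by rw [mul_comm]
  rw [Pi.smul_apply, hsum, smul_eq_mul]
  rcases zmod2_cases c with hc | hc
  · subst hc
    by_cases hx : x = 0
    · subst hx
      rw [Pi.single_eq_same, if_pos rfl, if_pos rfl]
      rw [pow_succ]
      field_simp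
    · rw [if_neg hx, mul_zero, mul_zero,
        Pi.single_eq_of_ne (by simp [Prod.ext_iff, hx]) 1]
  · have hc0 : c ≠ 0 := by rw [hc]; decide
    rw [if_neg hc0, zero_mul, mul_zero,
      Pi.single_eq_of_ne (by simp [Prod.ext_iff, hc0]) 1]

lemma myFourier {n : ℕ} (z : ℂ) (x : Fin n → ZMod 2) :
    ∑ a : Fin n → ZMod 2, z ^ (wt a) * χ (dot a x) = ∏ i, (1 + z * χ (x i)) := by
  have key : ∀ a : Fin n → ZMod 2, z ^ (wt a) * χ (dot a x)
      = ∏ i, ((if a i = 1 then z else 1) * χ (a i * x i)) := by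
    intro a
    rw [Finset.prod_mul_distrib, ← dot_apply]
    congr 1
    rw [wt, ← Finset.prod_const, Finset.prod_filter]
  rw [Finset.sum_congr rfl fun a _ => key a,
    ← Fintype.prod_sum fun i (u : ZMod 2) => (if u = 1 then z else 1) * χ (u * x i)]
  refine Finset.prod_congr rfl fun i _ => ?_
  have huniv : (Finset.univ : Finset (ZMod 2)) = {0, 1} := by decide
  rw [huniv, Finset.sum_pair (by decide : (0:ZMod 2) ≠ 1)]
  rw [if_neg (by decide : (0:ZMod 2) ≠ 1), if_pos rfl, zero_mul, chi_zero, one_mul, one_mul]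

lemma exp_mulVec_eigen {V : Type*} [Fintype V] [DecidableEq V]
    (M : Matrix V V ℂ) (v : V → ℂ) (μ : ℂ) (h : M.mulVec v = μ • v) :
    (NormedSpace.exp M).mulVec v = Complex.exp μ • v := by
  letI : SeminormedRing (Matrix V V ℂ) := Matrix.linftyOpSemiNormedRing
  letI : NormedRing (Matrix V V ℂ) := Matrix.linftyOpNormedRing
  letI : NormedAlgebra ℂ (Matrix V V ℂ) := Matrix.linftyOpNormedAlgebra
  have hk : ∀ k : ℕ, (M ^ k).mulVec v = μ ^ k • v := by
    intro k
    induction k with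
    | zero => simp [Matrix.one_mulVec]
    | succ k ih =>
      rw [pow_succ', pow_succ', ← Matrix.mulVec_mulVec, ih, Matrix.mulVec_smul, h, smul_smul,
        mul_comm]
  set L : Matrix V V ℂ →L[ℂ] (V → ℂ) :=
    LinearMap.toContinuousLinearMap
      { toFun := fun N => N.mulVec v
        map_add' := fun A B => Matrix.add_mulVec A B v
        map_smul' := fun c A => Matrix.smul_mulVec c A v } with hLdef
  have hL : ∀ N : Matrix V V ℂ, L N = N.mulVec v := fun N => rfl
  have hs : Summable fun k : ℕ => ((k.factorial : ℂ))⁻¹ • M ^ k :=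
    NormedSpace.expSeries_summable' M
  rw [NormedSpace.exp_eq_tsum ℂ, ← hL, L.map_tsum hs]
  have key : ∀ k : ℕ, L (((k.factorial : ℂ))⁻¹ • M ^ k) = (((k.factorial : ℂ))⁻¹ * μ ^ k) • v := by
    intro k
    rw [_root_.map_smul, hL, hk, smul_smul]
  rw [tsum_congr key]
  have hsμ : Summable fun k : ℕ => ((k.factorial : ℂ))⁻¹ * μ ^ k := by
    simpa [smul_eq_mul] using (NormedSpace.expSeries_summable' (𝕂 := ℂ) μ)
  rw [hsμ.tsum_smul_const, Complex.exp_eq_exp_ℂ, NormedSpace.exp_eq_tsum ℂ]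
  congr 1

lemma walk_val {n : ℕ} (t : ℝ) (x₀ : Fin n → ZMod 2) (hx : x₀ ≠ 0) :
    walk (bunkbedQQ n) (Pi.single ((0 : ZMod 2), (0 : Fin n → ZMod 2)) 1) t (1, x₀)
      = ((2:ℂ)^(n+1))⁻¹ * Complex.exp (-(2*t*n)*Complex.I)
          * ∏ i, (1 + Complex.exp (4*t*Complex.I) * χ (x₀ i)) := by
  set M : Matrix (ZMod 2 × (Fin n → ZMod 2)) (ZMod 2 × (Fin n → ZMod 2)) ℂ :=
    (-(t : ℂ) * Complex.I) • bunkbedQQ n with hM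
  have hwalk : walk (bunkbedQQ n) (Pi.single ((0 : ZMod 2), (0 : Fin n → ZMod 2)) 1) t
      = (NormedSpace.exp M).mulVec (Pi.single ((0 : ZMod 2), (0 : Fin n → ZMod 2)) 1) := rfl
  have heig : ∀ q : (ZMod 2) × (Fin n → ZMod 2),
      (NormedSpace.exp M).mulVec (vecBA q.1 q.2)
        = Complex.exp ((-(t : ℂ) * Complex.I) *
            ((if q.1 = 0 then (2:ℂ) else 0) * ((n : ℂ) - 2 * (wt q.2 : ℂ)))) • vecBA q.1 q.2 := by
    intro q
    refine exp_mulVec_eigen M _ _ ?_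
    rw [hM, Matrix.smul_mulVec, bunkbed_eigen, smul_smul]
  rw [hwalk, psi0_decomp, Matrix.mulVec_smul]
  have hsum : (NormedSpace.exp M).mulVec (∑ q : (ZMod 2) × (Fin n → ZMod 2), vecBA q.1 q.2)
      = ∑ q : (ZMod 2) × (Fin n → ZMod 2),
          Complex.exp ((-(t : ℂ) * Complex.I) *
            ((if q.1 = 0 then (2:ℂ) else 0) * ((n : ℂ) - 2 * (wt q.2 : ℂ)))) • vecBA q.1 q.2 := by
    rw [← Matrix.mulVecLin_apply, map_sum]
    exact Finset.sum_congr rfl fun q _ => by rw [Matrix.mulVecLin_apply, heig q]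
  rw [hsum]
  rw [Pi.smul_apply, Finset.sum_apply, smul_eq_mul]
  rw [Fintype.sum_prod_type]
  have huniv : (Finset.univ : Finset (ZMod 2)) = {0, 1} := by decide
  rw [huniv, Finset.sum_pair (by decide : (0:ZMod 2) ≠ 1)]
  have hb1 : ∑ a : Fin n → ZMod 2,
      Complex.exp ((-(t : ℂ) * Complex.I) *
        ((0:ℂ) * ((n : ℂ) - 2 * (wt a : ℂ))))
        • vecBA 1 a (1, x₀) = 0 := by
    have : ∀ a : Fin n → ZMod 2,
        Complex.exp ((-(t : ℂ) * Complex.I) *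
          ((0:ℂ) * ((n : ℂ) - 2 * (wt a : ℂ))))
          • vecBA 1 a (1, x₀) = - χ (dot a x₀) := by
      intro a
      rw [zero_mul, mul_zero, Complex.exp_zero]
      simp only [vecBA, mul_one, smul_eq_mul, one_mul]
      have h1 : χ 1 = -1 := if_neg (by decide)
      rw [h1]
      ring
    rw [Finset.sum_congr rfl fun a _ => this a, Finset.sum_neg_distrib, sum_chi_dot,
      if_neg hx, neg_zero]
  have hb0 : ∑ a : Fin n → ZMod 2,
      Complex.exp ((-(t : ℂ) * Complex.I) *
        ((2:ℂ) * ((n : ℂ) - 2 * (wt a : ℂ))))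
        • vecBA 0 a (1, x₀)
      = Complex.exp (-(2*t*n)*Complex.I) * ∏ i, (1 + Complex.exp (4*t*Complex.I) * χ (x₀ i)) := by
    have : ∀ a : Fin n → ZMod 2,
        Complex.exp ((-(t : ℂ) * Complex.I) *
          ((2:ℂ) * ((n : ℂ) - 2 * (wt a : ℂ))))
          • vecBA 0 a (1, x₀)
        = Complex.exp (-(2*t*n)*Complex.I)
            * ((Complex.exp (4*t*Complex.I)) ^ (wt a) * χ (dot a x₀)) := by
      intro a
      have hexp : Complex.exp ((-(t : ℂ) * Complex.I) *
          ((2:ℂ) * ((n : ℂ) - 2 * (wt a : ℂ))))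
          = Complex.exp (-(2*t*n)*Complex.I) * (Complex.exp (4*t*Complex.I)) ^ (wt a) := by
        rw [← Complex.exp_nat_mul, ← Complex.exp_add]
        congr 1
        push_cast
        ring
      rw [hexp]
      simp only [vecBA, smul_eq_mul]
      rw [show ((0 : ZMod 2) * 1) = 0 from rfl, chi_zero, one_mul]
      ring
    rw [Finset.sum_congr rfl fun a _ => this a, ← Finset.mul_sum, myFourier]
  simp only [Pi.smul_apply]
  simp only [if_true, if_neg (by decide : ¬ (1:ZMod 2) = 0)]
  rw [hb0, hb1, add_zero]
  ring

lemma prod_split {n : ℕ} (z : ℂ) (x₀ : Fin n → ZMod 2) :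
    ∏ i, (1 + z * χ (x₀ i)) = (1+z)^(n - wt x₀) * (1-z)^(wt x₀) := by
  rw [← Finset.prod_filter_mul_prod_filter_not Finset.univ (fun i => x₀ i = 1)]
  have h1 : ∏ i ∈ Finset.univ.filter (fun i => x₀ i = 1), (1 + z * χ (x₀ i))
      = (1-z)^(wt x₀) := by
    rw [Finset.prod_congr rfl fun i hi => ?_, Finset.prod_const]
    · rfl
    · have : x₀ i = 1 := (Finset.mem_filter.mp hi).2
      rw [this]
      have h1 : χ 1 = -1 := if_neg (by decide)
      rw [h1]; ring
  have h2 : ∏ i ∈ Finset.univ.filter (fun i => ¬ x₀ i = 1), (1 + z * χ (x₀ i))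
      = (1+z)^(n - wt x₀) := by
    have hcard : (Finset.univ.filter (fun i => ¬ x₀ i = 1)).card = n - wt x₀ := by
      have := Finset.card_filter_add_card_filter_not
        (s := (Finset.univ : Finset (Fin n))) (p := fun i => x₀ i = 1)
      simp only [Finset.card_univ, Fintype.card_fin] at this
      unfold wt
      omega
    rw [Finset.prod_congr rfl fun i hi => ?_, Finset.prod_const, hcard]
    · have : x₀ i ≠ 1 := (Finset.mem_filter.mp hi).2
      have h0 : x₀ i = 0 := (zmod2_cases (x₀ i)).resolve_right this
      rw [h0, chi_zero, mul_one]
  rw [h1, h2]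
  ring

lemma walk_abs {n : ℕ} (t : ℝ) (x₀ : Fin n → ZMod 2) (hx : x₀ ≠ 0) :
    ‖walk (bunkbedQQ n)
        (Pi.single ((0 : ZMod 2), (0 : Fin n → ZMod 2)) 1) t (1, x₀)‖ ^ 2
      = (((2:ℝ)^(n+1))⁻¹)^2
          * ((‖1 + Complex.exp (4*t*Complex.I)‖)^2)^(n - wt x₀)
          * ((‖1 - Complex.exp (4*t*Complex.I)‖)^2)^(wt x₀) := by
  rw [walk_val t x₀ hx, prod_split]
  rw [norm_mul, norm_mul, norm_mul, norm_pow, norm_pow, norm_inv, norm_pow, Complex.norm_two]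
  have h1 : ‖Complex.exp (-(2*t*(n:ℂ))*Complex.I)‖ = 1 := by
    rw [show (-(2*(t:ℂ)*(n:ℂ))) = ((-(2*t*(n:ℝ)) : ℝ) : ℂ) by push_cast; ring]
    exact Complex.norm_exp_ofReal_mul_I _
  rw [h1, mul_one]
  ring

lemma wt_double {n : ℕ} (i0 i1 : Fin n) (hne : i0 ≠ i1) :
    wt ((Pi.single i0 1 + Pi.single i1 1 : Fin n → ZMod 2)) = 2 := by
  unfold wt
  have hset : (Finset.univ.filter fun i =>
      (Pi.single i0 1 + Pi.single i1 1 : Fin n → ZMod 2) i = 1) = {i0, i1} := by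
    ext i
    simp only [Finset.mem_filter, Finset.mem_univ, true_and, Finset.mem_insert,
      Finset.mem_singleton, Pi.add_apply]
    constructor
    · intro h
      by_contra hc
      push_neg at hc
      rw [Pi.single_eq_of_ne hc.1, Pi.single_eq_of_ne hc.2, add_zero] at h
      exact (by decide : (0 : ZMod 2) ≠ 1) h
    · rintro (rfl | rfl)
      · rw [Pi.single_eq_same, Pi.single_eq_of_ne hne, add_zero]
      · rw [Pi.single_eq_same, Pi.single_eq_of_ne hne.symm, zero_add]
  rw [hset, Finset.card_insert_of_notMem (by simpa using hne), Finset.card_singleton]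


/-- For `n ≥ 2`, the quantum walk on `𝓑_n(Q_n)` starting at `(0, 0_n)` is
never instantaneous uniform mixing. -/
theorem bunkbed_QnQn_not_uniform_mixing (n : ℕ) (hn : 2 ≤ n) :
    ∀ t : ℝ, ∃ v : ZMod 2 × (Fin n → ZMod 2),
      ‖walk (bunkbedQQ n)
        (Pi.single ((0 : ZMod 2), (0 : Fin n → ZMod 2)) 1) t v‖ ^ 2
        ≠ 1 / 2 ^ (n + 1) := by
  intro t
  by_contra hcon
  push_neg at hcon
  set z : ℂ := Complex.exp (4*t*Complex.I) with hz
  set a : ℝ := (‖1 + z‖)^2 with hadef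
  set b : ℝ := (‖1 - z‖)^2 with hbdef
  have hzabs : ‖z‖ = 1 := by
    rw [hz, show (4*(t:ℂ)*Complex.I) = ((4*t : ℝ) : ℂ) * Complex.I by push_cast; ring]
    exact Complex.norm_exp_ofReal_mul_I _
  have hab : a + b = 4 := by
    rw [hadef, hbdef, Complex.sq_norm, Complex.sq_norm]
    have hnz : Complex.normSq z = 1 := by
      rw [← Complex.sq_norm, hzabs, one_pow]
    rw [Complex.normSq_apply] at hnz ⊢
    rw [Complex.normSq_apply]
    simp only [Complex.add_re, Complex.add_im, Complex.sub_re, Complex.sub_im,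
      Complex.one_re, Complex.one_im]
    nlinarith [hnz]
  -- the two test vertices
  have h0n : (0 : ℕ) < n := by omega
  have h1n : (1 : ℕ) < n := by omega
  set i0 : Fin n := ⟨0, h0n⟩
  set i1 : Fin n := ⟨1, h1n⟩
  have hne : i0 ≠ i1 := by simp [i0, i1, Fin.ext_iff]
  set x₁ : Fin n → ZMod 2 := Pi.single i0 1 with hx1def
  set x₂ : Fin n → ZMod 2 := Pi.single i0 1 + Pi.single i1 1 with hx2def
  have hw1 : wt x₁ = 1 := wt_single i0
  have hw2 : wt x₂ = 2 := wt_double i0 i1 hne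
  have hx1 : x₁ ≠ 0 := by
    intro h
    have := congr_fun h i0
    rw [hx1def, Pi.single_eq_same] at this
    exact (by decide : (1 : ZMod 2) ≠ 0) this
  have hx2 : x₂ ≠ 0 := by
    intro h
    have := congr_fun h i0
    rw [hx2def, Pi.add_apply, Pi.single_eq_same, Pi.single_eq_of_ne hne, add_zero, Pi.zero_apply] at this
    exact (by decide : (1 : ZMod 2) ≠ 0) this
  have e1 := hcon (1, x₁)
  have e2 := hcon (1, x₂)
  rw [walk_abs t x₁ hx1, hw1] at e1
  rw [walk_abs t x₂ hx2, hw2] at e2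
  set P : ℝ := (2:ℝ)^(n+1) with hPdef
  have hP : (0:ℝ) < P := by positivity
  have ha0 : 0 ≤ a := by positivity
  have hb0 : 0 ≤ b := by positivity
  -- clean up e1, e2
  have f1 : a^(n-1) * b = P := by
    have : (P⁻¹)^2 * a^(n-1) * b^1 = 1/P := e1
    field_simp at this
    nlinarith [this, hP]
  have f2 : a^(n-2) * b^2 = P := by
    have : (P⁻¹)^2 * a^(n-2) * b^2 = 1/P := e2
    field_simp at this
    nlinarith [this, hP]
  have hsplit : n - 1 = (n - 2) + 1 := by omega
  rw [hsplit, pow_succ] at f1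
  have hc : a^(n-2) * b ≠ 0 := by
    intro h
    rw [show a^(n-2) * a * b = (a^(n-2) * b) * a by ring, h, zero_mul] at f1
    exact hP.ne' f1.symm
  have haeqb : a = b := by
    have : (a^(n-2) * b) * a = (a^(n-2) * b) * b := by
      rw [show (a^(n-2) * b) * a = a^(n-2) * a * b by ring, f1,
        show (a^(n-2) * b) * b = a^(n-2) * b^2 by ring, f2]
    exact mul_left_cancel₀ hc this
  have ha2 : a = 2 := by linarith
  have hb2 : b = 2 := by linarith
  rw [ha2, hb2] at f1
  have : (2:ℝ)^(n-2) * 2 * 2 = 2^n := by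
    rw [show (2:ℝ)^(n-2) * 2 * 2 = 2^((n-2)+1+1) by ring, show (n-2)+1+1 = n by omega]
  rw [this] at f1
  rw [hPdef, pow_succ] at f1
  have h2n : (0:ℝ) < 2^n := by positivity
  linarith
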